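/- For every even positive integer n, the languages K = L((b* a)^{n-2} (bb)*) restricted appropriately and L accepted by the n-state DFA cycling on b with accepting states at even positions admit a finite alternating subsequence tower of height n² − n + 1 and admit no infinite alternating tower. Concretely: let K be the language accepted by the NFA A_0 with states 1,…,n, a-transitions i → i+1 for 1 ≤ i ≤ n−2, b-self-loops on states 1,…,n−2, a b-cycle between n−1 and n, all of 1,…,n−1 initial, and n−1 the unique accepting state; let L be the language of the DFA A_1 with states 1,…,n, b-transitions i → i+1 for 1 ≤ i ≤ n−1, an a-transition n → 1, initial state 1, accepting states the even states. Then the prefixes of (b^{n-1} a)^{n-2} b^n ending with an even number of b's lie in K, the prefixes ending with an odd number of b's lie in L, giving a tower of height n² − n + 1, and no infinite alternating tower between K and L exists. -/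

import Mathlib

/-- A finite alternating subsequence tower of height `r` between `K` and `L`,
given by the first `r` values of `w`. -/
def SubTower {α : Type*} (K L : Set (List α)) (r : ℕ) (w : ℕ → List α) : Prop :=
  (0 < r → w 0 ∈ K ∪ L) ∧
    ∀ i, i + 1 < r →
      (w i).Sublist (w (i + 1)) ∧
        (w i ∈ K → w (i + 1) ∈ L) ∧ (w i ∈ L → w (i + 1) ∈ K)

/-- An infinite alternating subsequence tower between `K` and `L`. -/
def InfSubTower {α : Type*} (K L : Set (List α)) (w : ℕ → List α) : Prop :=
  w 0 ∈ K ∪ L ∧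
    ∀ i, (w i).Sublist (w (i + 1)) ∧
      (w i ∈ K → w (i + 1) ∈ L) ∧ (w i ∈ L → w (i + 1) ∈ K)

/-- The letter `a` is `false`, the letter `b` is `true`.
The NFA `A₀`: states `1,…,n` are represented by `Fin n` (state `s` is index `s-1`);
`a`-transitions `i → i+1` for `1 ≤ i ≤ n-2`, `b`-self-loops on states `1,…,n-2`,
a `b`-cycle between `n-1` and `n`; states `1,…,n-1` initial, `n-1` accepting. -/
def towerA0 (n : ℕ) : NFA Bool (Fin n) where
  step i c :=
    if c = false then
      {j | (j : ℕ) = (i : ℕ) + 1 ∧ (i : ℕ) + 3 ≤ n}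
    else
      {j | ((i : ℕ) + 3 ≤ n ∧ j = i) ∨
        ((i : ℕ) + 2 = n ∧ (j : ℕ) + 1 = n) ∨ ((i : ℕ) + 1 = n ∧ (j : ℕ) + 2 = n)}
  start := {i | (i : ℕ) + 2 ≤ n}
  accept := {i | (i : ℕ) + 2 = n}

/-- The (partial deterministic) automaton `A₁`: `b`-transitions `i → i+1` for
`1 ≤ i ≤ n-1`, an `a`-transition from `n` to `1`; state `1` initial,
even states accepting (state `s` is index `s-1`). -/
def towerA1 (n : ℕ) : NFA Bool (Fin n) where
  step i c :=
    if c = true then {j | (j : ℕ) = (i : ℕ) + 1}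
    else {j | (i : ℕ) + 1 = n ∧ (j : ℕ) = 0}
  start := {i | (i : ℕ) = 0}
  accept := {i | Odd (i : ℕ)}
namespace QTower

/-- trailing `true`s -/
def tb (x : List Bool) : ℕ := (x.reverse.takeWhile id).length

@[simp] lemma tb_nil : tb [] = 0 := rfl

@[simp] lemma tb_append_true (x : List Bool) : tb (x ++ [true]) = tb x + 1 := by
  simp [tb, List.takeWhile]

@[simp] lemma tb_append_false (x : List Bool) : tb (x ++ [false]) = 0 := by
  simp [tb, List.takeWhile]

lemma tb_append_replicate (x : List Bool) (k : ℕ) :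
    tb (x ++ List.replicate k true) = tb x + k := by
  induction k with
  | zero => simp
  | succ m ih =>
    rw [List.replicate_succ', ← List.append_assoc, tb_append_true, ih]
    omega

@[simp] lemma tb_replicate (k : ℕ) : tb (List.replicate k true) = k := by
  simpa using tb_append_replicate [] k

lemma mem_evalFrom_step {σ : Type*} (M : NFA Bool σ) {S : Set σ} {x : List Bool}
    {s t : σ} {c : Bool} (hs : s ∈ M.evalFrom S x) (ht : t ∈ M.step s c) :
    t ∈ M.evalFrom S (x ++ [c]) := by
  rw [M.evalFrom_append, M.evalFrom_singleton, NFA.mem_stepSet]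
  exact ⟨s, hs, ht⟩

end QTower
namespace QTower

lemma A0_sound {n : ℕ} : ∀ (x : List Bool) (s : Fin n), s ∈ (towerA0 n).eval x →
    (x.count false ≤ (s : ℕ) ∧ x.count false ≤ n - 2) ∧
    ((s : ℕ) + 2 = n → Even (tb x)) ∧ ((s : ℕ) + 1 = n → ¬ Even (tb x)) := by
  intro x
  induction x using List.reverseRecOn with
  | nil =>
    intro s hs
    have hs' : (s : ℕ) + 2 ≤ n := hs
    simp only [tb_nil, List.count_nil]
    exact ⟨⟨Nat.zero_le _, Nat.zero_le _⟩, fun _ => Even.zero, fun h => by omega⟩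
  | append_singleton x c ih =>
    intro s hs
    rw [NFA.eval_append_singleton, NFA.mem_stepSet] at hs
    obtain ⟨t, ht, hstep⟩ := hs
    obtain ⟨⟨hc1, hc2⟩, he, ho⟩ := ih t ht
    cases c with
    | false =>
      simp [towerA0] at hstep
      obtain ⟨h1, h2⟩ := hstep
      have hcnt : (x ++ [false]).count false = x.count false + 1 := by simp
      rw [hcnt, tb_append_false]
      exact ⟨⟨by omega, by omega⟩, fun _ => Even.zero, fun h => by omega⟩
    | true =>
      simp [towerA0] at hstep
      have hcnt : (x ++ [true]).count false = x.count false := by simp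
      rw [hcnt, tb_append_true, Nat.even_add_one]
      rcases hstep with ⟨h1, h2⟩ | ⟨h1, h2⟩ | ⟨h1, h2⟩
      · subst h2
        exact ⟨⟨hc1, hc2⟩, fun h => by omega, fun h => by omega⟩
      · refine ⟨⟨by omega, hc2⟩, fun h => by omega, fun _ => by simpa using he h1⟩
      · refine ⟨⟨by omega, hc2⟩, fun h => ?_, fun h => by omega⟩
        simpa using ho h1

lemma A1_sound {n : ℕ} : ∀ (x : List Bool) (s : Fin n), s ∈ (towerA1 n).eval x →
    (s : ℕ) = tb x ∧ x.length ≤ n * x.count false + (s : ℕ) := by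
  intro x
  induction x using List.reverseRecOn with
  | nil =>
    intro s hs
    have hs' : (s : ℕ) = 0 := hs
    simp [hs']
  | append_singleton x c ih =>
    intro s hs
    rw [NFA.eval_append_singleton, NFA.mem_stepSet] at hs
    obtain ⟨t, ht, hstep⟩ := hs
    obtain ⟨h1, h2⟩ := ih t ht
    cases c with
    | false =>
      simp [towerA1] at hstep
      obtain ⟨ha, hb⟩ := hstep
      have hcnt : (x ++ [false]).count false = x.count false + 1 := by simp
      have hlen : (x ++ [false]).length = x.length + 1 := by simp
      rw [hcnt, hlen, tb_append_false, Nat.mul_add, Nat.mul_one]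
      exact ⟨hb, by omega⟩
    | true =>
      simp [towerA1] at hstep
      have hcnt : (x ++ [true]).count false = x.count false := by simp
      have hlen : (x ++ [true]).length = x.length + 1 := by simp
      rw [hcnt, hlen, tb_append_true]
      exact ⟨by omega, by omega⟩

end QTower
namespace QTower

/-- block -/
def blk (n : ℕ) : List Bool := List.replicate (n - 1) true ++ [false]

lemma A0_step_self {n : ℕ} {s : Fin n} (h3 : (s : ℕ) + 3 ≤ n) :
    s ∈ (towerA0 n).step s true := by
  simp [towerA0]
  exact Or.inl h3

lemma A0_selfloop {n : ℕ} {S : Set (Fin n)} {x : List Bool} {s : Fin n}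
    (h3 : (s : ℕ) + 3 ≤ n) (hs : s ∈ (towerA0 n).evalFrom S x) (k : ℕ) :
    s ∈ (towerA0 n).evalFrom S (x ++ List.replicate k true) := by
  induction k generalizing x with
  | zero => simpa using hs
  | succ m ih =>
    have h1 : s ∈ (towerA0 n).evalFrom S (x ++ [true]) :=
      mem_evalFrom_step _ hs (A0_step_self h3)
    have := ih h1
    rwa [List.append_assoc, List.singleton_append, ← List.replicate_succ] at this

lemma A0_a_step {n : ℕ} {S : Set (Fin n)} {x : List Bool} {s t : Fin n}
    (h3 : (s : ℕ) + 3 ≤ n) (ht : (t : ℕ) = (s : ℕ) + 1)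
    (hs : s ∈ (towerA0 n).evalFrom S x) :
    t ∈ (towerA0 n).evalFrom S (x ++ [false]) := by
  refine mem_evalFrom_step _ hs ?_
  simp [towerA0]
  exact ⟨ht, h3⟩

lemma A0_cycle {n : ℕ} (hn : 2 ≤ n) {S : Set (Fin n)} {x : List Bool} {s : Fin n}
    (h2 : (s : ℕ) + 2 = n) (hs : s ∈ (towerA0 n).evalFrom S x) {k : ℕ} (hk : Even k) :
    s ∈ (towerA0 n).evalFrom S (x ++ List.replicate k true) := by
  obtain ⟨m, rfl⟩ := hk
  induction m generalizing x with
  | zero => simpa using hs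
  | succ m ih =>
    have hlt : n - 1 < n := by omega
    have t_def : ∃ t : Fin n, (t : ℕ) = n - 1 := ⟨⟨n - 1, hlt⟩, rfl⟩
    obtain ⟨t, htv⟩ := t_def
    have h1 : t ∈ (towerA0 n).step s true := by
      simp [towerA0]
      exact Or.inr (Or.inl ⟨h2, by omega⟩)
    have h2' : s ∈ (towerA0 n).step t true := by
      simp [towerA0]
      exact Or.inr (Or.inr ⟨by omega, h2⟩)
    have e1 : t ∈ (towerA0 n).evalFrom S (x ++ [true]) := mem_evalFrom_step _ hs h1
    have e2 : s ∈ (towerA0 n).evalFrom S ((x ++ [true]) ++ [true]) :=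
      mem_evalFrom_step _ e1 h2'
    have := ih e2
    have heq : ((x ++ [true]) ++ [true]) ++ List.replicate (m + m) true
        = x ++ List.replicate (m + 1 + (m + 1)) true := by
      rw [show m + 1 + (m + 1) = (m + m) + 1 + 1 by omega, List.replicate_succ,
        List.replicate_succ]
      simp
    rwa [heq] at this

lemma A0_blocks {n : ℕ} : ∀ (j : ℕ) {S : Set (Fin n)} {x : List Bool} {s : Fin n},
    s ∈ (towerA0 n).evalFrom S x → (s : ℕ) + j + 2 = n →
    ∃ t : Fin n, (t : ℕ) + 2 = n ∧
      t ∈ (towerA0 n).evalFrom S (x ++ (List.replicate j (blk n)).flatten) := by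
  intro j
  induction j with
  | zero =>
    intro S x s hs h
    exact ⟨s, by omega, by simpa using hs⟩
  | succ m ih =>
    intro S x s hs h
    have h3 : (s : ℕ) + 3 ≤ n := by omega
    have e1 : s ∈ (towerA0 n).evalFrom S (x ++ List.replicate (n - 1) true) :=
      A0_selfloop h3 hs _
    have hlt : (s : ℕ) + 1 < n := by omega
    set t : Fin n := ⟨(s : ℕ) + 1, hlt⟩ with htdef
    have e2 : t ∈ (towerA0 n).evalFrom S ((x ++ List.replicate (n - 1) true) ++ [false]) :=
      A0_a_step h3 rfl e1
    obtain ⟨u, hu1, hu2⟩ := ih e2 (by simp [htdef]; omega)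
    refine ⟨u, hu1, ?_⟩
    have heq : ((x ++ List.replicate (n - 1) true) ++ [false]) ++ (List.replicate m (blk n)).flatten
        = x ++ (List.replicate (m + 1) (blk n)).flatten := by
      rw [List.replicate_succ, List.flatten_cons, blk]
      simp [List.append_assoc]
    rwa [heq] at hu2

lemma mem_K {n : ℕ} (hn : 2 ≤ n) (j k : ℕ) (hj : j ≤ n - 2) (hk : Even k) :
    (List.replicate j (blk n)).flatten ++ List.replicate k true ∈ (towerA0 n).accepts := by
  have hlt : n - 2 - j < n := by omega
  set s : Fin n := ⟨n - 2 - j, hlt⟩ with hsdef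
  have hstart : s ∈ (towerA0 n).start := by
    simp [towerA0, hsdef]; omega
  have h0 : s ∈ (towerA0 n).evalFrom (towerA0 n).start [] := hstart
  obtain ⟨t, ht1, ht2⟩ := A0_blocks j h0 (by simp [hsdef]; omega)
  rw [List.nil_append] at ht2
  have hc : t ∈ (towerA0 n).evalFrom (towerA0 n).start
      ((List.replicate j (blk n)).flatten ++ List.replicate k true) :=
    A0_cycle hn ht1 ht2 hk
  exact ⟨t, ht1, hc⟩

lemma A1_bs {n : ℕ} {S : Set (Fin n)} : ∀ (k : ℕ) {x : List Bool} {s : Fin n},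
    s ∈ (towerA1 n).evalFrom S x → (s : ℕ) + k < n →
    ∃ t : Fin n, (t : ℕ) = (s : ℕ) + k ∧
      t ∈ (towerA1 n).evalFrom S (x ++ List.replicate k true) := by
  intro k
  induction k with
  | zero =>
    intro x s hs h
    exact ⟨s, by omega, by simpa using hs⟩
  | succ m ih =>
    intro x s hs h
    have hlt : (s : ℕ) + 1 < n := by omega
    set t : Fin n := ⟨(s : ℕ) + 1, hlt⟩ with htdef
    have h1 : t ∈ (towerA1 n).step s true := by simp [towerA1, htdef]
    have e1 : t ∈ (towerA1 n).evalFrom S (x ++ [true]) := mem_evalFrom_step _ hs h1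
    obtain ⟨u, hu1, hu2⟩ := ih e1 (by simp [htdef]; omega)
    refine ⟨u, by simp [htdef] at hu1; omega, ?_⟩
    rwa [List.append_assoc, List.singleton_append, ← List.replicate_succ] at hu2

lemma A1_blocks {n : ℕ} (hn : 2 ≤ n) : ∀ (j : ℕ) {S : Set (Fin n)} {x : List Bool} {s : Fin n},
    s ∈ (towerA1 n).evalFrom S x → (s : ℕ) = 0 →
    ∃ t : Fin n, (t : ℕ) = 0 ∧
      t ∈ (towerA1 n).evalFrom S (x ++ (List.replicate j (blk n)).flatten) := by
  intro j
  induction j with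
  | zero =>
    intro S x s hs h
    exact ⟨s, h, by simpa using hs⟩
  | succ m ih =>
    intro S x s hs h
    obtain ⟨t, ht1, ht2⟩ := A1_bs (n - 1) hs (by omega)
    have hlt0 : 0 < n := by omega
    set z : Fin n := ⟨0, hlt0⟩ with hzdef
    have hstep : z ∈ (towerA1 n).step t false := by
      simp [towerA1, hzdef]; omega
    have e2 : z ∈ (towerA1 n).evalFrom S ((x ++ List.replicate (n - 1) true) ++ [false]) :=
      mem_evalFrom_step _ ht2 hstep
    obtain ⟨u, hu1, hu2⟩ := ih e2 rfl
    refine ⟨u, hu1, ?_⟩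
    have heq : ((x ++ List.replicate (n - 1) true) ++ [false]) ++ (List.replicate m (blk n)).flatten
        = x ++ (List.replicate (m + 1) (blk n)).flatten := by
      rw [List.replicate_succ, List.flatten_cons, blk]
      simp [List.append_assoc]
    rwa [heq] at hu2

lemma mem_L {n : ℕ} (hn : 2 ≤ n) (j k : ℕ) (hk : k < n) (hodd : ¬ Even k) :
    (List.replicate j (blk n)).flatten ++ List.replicate k true ∈ (towerA1 n).accepts := by
  have hlt0 : 0 < n := by omega
  set z : Fin n := ⟨0, hlt0⟩ with hzdef
  have hstart : z ∈ (towerA1 n).start := rfl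
  have h0 : z ∈ (towerA1 n).evalFrom (towerA1 n).start [] := hstart
  obtain ⟨t, ht1, ht2⟩ := A1_blocks hn j h0 rfl
  rw [List.nil_append] at ht2
  obtain ⟨u, hu1, hu2⟩ := A1_bs k ht2 (by omega)
  refine ⟨u, ?_, hu2⟩
  show Odd (u : ℕ)
  rw [hu1, ht1, Nat.zero_add]
  exact Nat.not_even_iff_odd.mp hodd

end QTower
namespace QTower

lemma blk_length {n : ℕ} (hn : 1 ≤ n) : (blk n).length = n := by
  simp [blk]; omega

lemma flatten_replicate_length {n : ℕ} (hn : 1 ≤ n) (m : ℕ) :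
    ((List.replicate m (blk n)).flatten).length = m * n := by
  induction m with
  | zero => simp
  | succ j ih =>
    rw [List.replicate_succ, List.flatten_cons, List.length_append, ih, blk_length hn]
    ring

lemma tb_blocks {n : ℕ} (hn : 1 ≤ n) (j k : ℕ) :
    tb ((List.replicate j (blk n)).flatten ++ List.replicate k true) = k := by
  cases j with
  | zero => simp
  | succ m =>
    rw [List.replicate_succ', List.flatten_append, tb_append_replicate]
    have : (List.replicate m (blk n)).flatten ++ [blk n].flatten
        = ((List.replicate m (blk n)).flatten ++ List.replicate (n - 1) true) ++ [false] := by
      simp [blk]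
    rw [this, tb_append_false, Nat.zero_add]

lemma prefix_replicate {α : Type*} {p : List α} {N : ℕ} {a : α}
    (h : p <+: List.replicate N a) : p = List.replicate p.length a ∧ p.length ≤ N := by
  have hl : p.length ≤ N := by
    simpa using h.length_le
  constructor
  · rw [List.prefix_iff_eq_take] at h
    rw [h, List.take_replicate]
    simp [Nat.min_eq_left hl, hl]
  · exact hl

lemma prefix_decomp {n : ℕ} (hn : 2 ≤ n) : ∀ (m : ℕ) {N : ℕ}, N ≤ n → ∀ p : List Bool,
    p <+: (List.replicate m (blk n)).flatten ++ List.replicate N true →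
    ∃ j k, j ≤ m ∧ k ≤ n ∧
      p = (List.replicate j (blk n)).flatten ++ List.replicate k true := by
  intro m
  induction m with
  | zero =>
    intro N hN p hp
    rw [List.replicate_zero, List.flatten_nil, List.nil_append] at hp
    obtain ⟨h1, h2⟩ := prefix_replicate hp
    exact ⟨0, p.length, le_refl _, by omega, by simpa using h1⟩
  | succ m ih =>
    intro N hN p hp
    have hsplit : (List.replicate (m + 1) (blk n)).flatten ++ List.replicate N true
        = blk n ++ ((List.replicate m (blk n)).flatten ++ List.replicate N true) := by
      rw [List.replicate_succ, List.flatten_cons, List.append_assoc]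
    rw [hsplit] at hp
    by_cases hl : p.length ≤ n - 1
    · -- p is a prefix of the initial replicate (n-1) true
      have hp' : p = List.replicate p.length true := by
        rw [List.prefix_iff_eq_take] at hp
        rw [hp, blk, List.append_assoc, List.take_append_of_le_length
          (by simp; omega), List.take_replicate]
        simp [Nat.min_eq_left hl]
      exact ⟨0, p.length, by omega, by omega, by simpa using hp'⟩
    · by_cases hl2 : p.length ≤ n
      · -- p = blk n
        have hlen : p.length = n := by omega
        have hp' : p = blk n := by
          rw [List.prefix_iff_eq_take] at hp
          have hb : (blk n).length = n := blk_length (by omega)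
          rw [hp, List.take_append_of_le_length (by omega),
            List.take_of_length_le (by omega)]
        refine ⟨1, 0, by omega, by omega, ?_⟩
        simp [hp']
      · -- blk n is a proper prefix of p
        have hblk : blk n <+: p := by
          refine List.prefix_of_prefix_length_le (List.prefix_append _ _) hp ?_
          rw [blk_length (by omega)]; omega
        obtain ⟨p', rfl⟩ := hblk
        have hp'' : p' <+: (List.replicate m (blk n)).flatten ++ List.replicate N true := by
          obtain ⟨u, hu⟩ := hp
          rw [List.append_assoc] at hu
          exact ⟨u, List.append_cancel_left hu⟩
        obtain ⟨j, k, hj, hk, rfl⟩ := ih hN p' hp''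
        refine ⟨j + 1, k, by omega, hk, ?_⟩
        rw [List.replicate_succ, List.flatten_cons, List.append_assoc]

lemma K_tb {n : ℕ} {x : List Bool} (h : x ∈ (towerA0 n).accepts) : Even (tb x) := by
  obtain ⟨s, hacc, hev⟩ := h
  exact (A0_sound x s hev).2.1 hacc

lemma K_count {n : ℕ} {x : List Bool} (h : x ∈ (towerA0 n).accepts) :
    x.count false ≤ n - 2 := by
  obtain ⟨s, hacc, hev⟩ := h
  exact (A0_sound x s hev).1.2

lemma L_tb {n : ℕ} {x : List Bool} (h : x ∈ (towerA1 n).accepts) : ¬ Even (tb x) := by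
  obtain ⟨s, hacc, hev⟩ := h
  obtain ⟨h1, _⟩ := A1_sound x s hev
  have : Odd (s : ℕ) := hacc
  rw [← h1]
  exact Nat.not_even_iff_odd.mpr this

lemma L_len {n : ℕ} {x : List Bool} (h : x ∈ (towerA1 n).accepts) :
    x.length ≤ n * x.count false + (n - 1) := by
  obtain ⟨s, hacc, hev⟩ := h
  obtain ⟨_, h2⟩ := A1_sound x s hev
  have : (s : ℕ) < n := s.isLt
  omega

end QTower
open QTower

theorem quadratic_tower (n : ℕ) (hpos : 0 < n) (heven : Even n) :
    let K : Set (List Bool) := (towerA0 n).accepts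
    let L : Set (List Bool) := (towerA1 n).accepts
    let w : List Bool :=
      (List.replicate (n - 2) (List.replicate (n - 1) true ++ [false])).flatten ++
        List.replicate n true
    (∀ p, p <+: w → Even (p.reverse.takeWhile id).length → p ∈ K) ∧
    (∀ p, p <+: w → ¬ Even (p.reverse.takeWhile id).length → p ∈ L) ∧
    (∃ t : ℕ → List Bool, SubTower K L (n ^ 2 - n + 1) t) ∧
    ¬ ∃ t : ℕ → List Bool, InfSubTower K L t := by
  intro K L w
  have hn : 2 ≤ n := by
    obtain ⟨m, rfl⟩ := heven; omega
  have hw : w = (List.replicate (n - 2) (blk n)).flatten ++ List.replicate n true := rfl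
  -- membership in K for prefixes with an even number of trailing b's
  have part1 : ∀ p, p <+: w → Even (tb p) → p ∈ (towerA0 n).accepts := by
    intro p hp hev
    obtain ⟨j, k, hj, hk, rfl⟩ := prefix_decomp hn (n - 2) (le_refl n) p (hw ▸ hp)
    rw [tb_blocks (by omega)] at hev
    exact mem_K hn j k hj hev
  -- membership in L for prefixes with an odd number of trailing b's
  have part2 : ∀ p, p <+: w → ¬ Even (tb p) → p ∈ (towerA1 n).accepts := by
    intro p hp hod
    obtain ⟨j, k, hj, hk, rfl⟩ := prefix_decomp hn (n - 2) (le_refl n) p (hw ▸ hp)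
    rw [tb_blocks (by omega)] at hod
    have hkn : k < n :=
      lt_of_le_of_ne hk (fun h => hod (h ▸ heven))
    exact mem_L hn j k hkn hod
  have hwlen : w.length = n ^ 2 - n := by
    rw [hw, List.length_append, flatten_replicate_length (by omega), List.length_replicate]
    obtain ⟨m, rfl⟩ : ∃ m, n = m + 2 := ⟨n - 2, by omega⟩
    have h2 : (m + 2) ^ 2 = m * (m + 2) + (m + 2) + (m + 2) := by ring
    have h3 : m + 2 - 2 = m := by omega
    rw [h3]
    omega
  -- parity of trailing b's of a prefix matches parity of its length
  have hpar : ∀ p, p <+: w → (Even (tb p) ↔ Even p.length) := by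
    intro p hp
    obtain ⟨j, k, hj, hk, rfl⟩ := prefix_decomp hn (n - 2) (le_refl n) p (hw ▸ hp)
    rw [tb_blocks (by omega), List.length_append, flatten_replicate_length (by omega),
      List.length_replicate]
    have hjn : Even (j * n) := heven.mul_left j
    rw [Nat.even_add]
    tauto
  refine ⟨fun p hp he => part1 p hp he, fun p hp ho => part2 p hp ho, ?_, ?_⟩
  · -- the tower of height n^2 - n + 1
    refine ⟨fun i => w.take i, ?_, ?_⟩
    · intro _
      left
      exact part1 _ (List.take_prefix _ _)
        (by show Even (tb (List.take 0 w)); rw [List.take_zero]; exact Even.zero)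
    · intro i hi
      have hi' : i + 1 ≤ w.length := by omega
      have hpre : ∀ j, j ≤ w.length → (w.take j).length = j := by
        intro j hj; rw [List.length_take]; omega
      have hsub : (w.take i).Sublist (w.take (i + 1)) := by
        have h1 : (w.take (i + 1)).take i = w.take i := by
          rw [List.take_take]; congr 1; omega
        exact h1 ▸ (List.take_prefix i (w.take (i + 1))).sublist
      refine ⟨hsub, ?_, ?_⟩
      · intro hK
        have hie : Even i := by
          rw [← hpre i (by omega)]
          exact (hpar _ (List.take_prefix _ _)).mp (K_tb hK)
        apply part2 _ (List.take_prefix _ _)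
        rw [hpar _ (List.take_prefix _ _), hpre (i + 1) hi', Nat.even_add_one]
        exact not_not_intro hie
      · intro hL
        have hio : ¬ Even i := by
          rw [← hpre i (by omega)]
          exact fun h => L_tb hL ((hpar _ (List.take_prefix _ _)).mpr h)
        apply part1 _ (List.take_prefix _ _)
        rw [hpar _ (List.take_prefix _ _), hpre (i + 1) hi', Nat.even_add_one]
        exact hio
  · -- no infinite tower
    rintro ⟨t, ht0, hstep⟩
    have hmem : ∀ i, t i ∈ (towerA0 n).accepts ∨ t i ∈ (towerA1 n).accepts := by
      intro i
      induction i with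
      | zero => exact ht0
      | succ j ih =>
        rcases ih with h | h
        · exact Or.inr ((hstep j).2.1 h)
        · exact Or.inl ((hstep j).2.2 h)
    have hne : ∀ i, t i ≠ t (i + 1) := by
      intro i heq
      rcases hmem i with h | h
      · exact L_tb ((hstep i).2.1 h) (K_tb (heq ▸ h))
      · exact L_tb (heq ▸ h) (K_tb ((hstep i).2.2 h))
    have hlt : ∀ i, (t i).length < (t (i + 1)).length := by
      intro i
      have hs := (hstep i).1
      exact lt_of_le_of_ne hs.length_le (fun h => hne i (hs.eq_of_length h))
    have hgrow : ∀ i, i ≤ (t i).length := by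
      intro i
      induction i with
      | zero => exact Nat.zero_le _
      | succ j ih => have := hlt j; omega
    have hcnt : ∀ i, (t i).count false ≤ n - 2 := by
      intro i
      rcases hmem i with h | h
      · exact K_count h
      · exact le_trans ((hstep i).1.count_le false) (K_count ((hstep i).2.2 h))
    have hLlen : ∀ i, t i ∈ (towerA1 n).accepts →
        (t i).length ≤ n * (n - 2) + (n - 1) := by
      intro i h
      have h1 := L_len h
      have h2 := Nat.mul_le_mul_left n (hcnt i)
      omega
    set B := n * (n - 2) + (n - 1) with hB
    rcases hmem (B + 1) with h | h
    · have h2 := (hstep (B + 1)).2.1 h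
      have h3 := hLlen (B + 2) h2
      have h4 := hgrow (B + 2)
      omega
    · have h3 := hLlen (B + 1) h
      have h4 := hgrow (B + 1)
      omega
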